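/- Let $l > 0$ and let $(\lambda_n)_{n\in\mathbb{N}}$ be complex numbers satisfying $\lambda_n = n\pi/l + O(1/n)$. Set $e_n(x) = e^{i\lambda_n x}$ for $x \in [0,l]$. Then there exists $C \geq 0$ such that for all $j < k$: $|\langle e_j, e_k\rangle_{L^2(0,l)}| \leq C/(k - j)$ and $|\langle e_j, e_k\rangle + \langle \tilde{e}_j, \tilde{e}_k\rangle| \leq C/(\langle j\rangle (k-j))$, where $\tilde{e}_n(x) = e^{-i\lambda_n x}$ and $\langle j \rangle = (1 + j^2)^{1/2}$. -/

import Mathlib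

open Filter Complex

lemma myProdEqExp (e a b : ℂ) (he : (starRingEnd ℂ) e = -e) (x : ℝ) :
    Complex.exp (e * a * x) * (starRingEnd ℂ) (Complex.exp (e * b * x))
      = Complex.exp (e * (a - (starRingEnd ℂ) b) * x) := by
  rw [← Complex.exp_conj, ← Complex.exp_add, map_mul, map_mul, he, Complex.conj_ofReal]
  congr 1
  ring

lemma myIntegralFormula (e a b : ℂ) (he : (starRingEnd ℂ) e = -e)
    (h0 : e * (a - (starRingEnd ℂ) b) ≠ 0) (l : ℝ) :
    (∫ x in (0:ℝ)..l, Complex.exp (e * a * x) * (starRingEnd ℂ) (Complex.exp (e * b * x)))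
      = (Complex.exp (e * (a - (starRingEnd ℂ) b) * l) - 1) / (e * (a - (starRingEnd ℂ) b)) := by
  simp_rw [myProdEqExp e a b he]
  rw [integral_exp_mul_complex h0]
  norm_num

lemma myTrivialBound (e a b : ℂ) (he : (starRingEnd ℂ) e = -e)
    (B l : ℝ) (hl : 0 < l)
    (hB : ∀ x : ℝ, x ∈ Set.uIoc (0:ℝ) l → (e * (a - (starRingEnd ℂ) b) * x).re ≤ B) :
    ‖(∫ x in (0:ℝ)..l, Complex.exp (e * a * x) * (starRingEnd ℂ) (Complex.exp (e * b * x)))‖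
      ≤ Real.exp B * l := by
  simp_rw [myProdEqExp e a b he]
  have := intervalIntegral.norm_integral_le_of_norm_le_const
    (a := (0:ℝ)) (b := l) (C := Real.exp B)
    (f := fun x : ℝ => Complex.exp (e * (a - (starRingEnd ℂ) b) * x)) ?_
  · calc _ ≤ Real.exp B * |l - 0| := this
    _ = Real.exp B * l := by rw [sub_zero, abs_of_pos hl]
  · intro x hx
    rw [Complex.norm_exp]
    exact Real.exp_le_exp.2 (hB x hx)

lemma myBigOBound (f : ℕ → ℂ) (h : f =O[atTop] fun n : ℕ => 1/(n:ℝ)) :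
    ∃ A : ℝ, 1 ≤ A ∧ ∀ n : ℕ, ‖(f n)‖ ≤ A / ((n:ℝ)+1) := by
  obtain ⟨c, hc⟩ := h.bound
  rw [eventually_atTop] at hc
  obtain ⟨N, hN⟩ := hc
  set g : ℕ → ℝ := fun n => ‖(f n)‖ * ((n:ℝ)+1) with hg
  set T : Finset ℝ := insert (2*|c|) ((Finset.range (N+1)).image g) with hT
  have hTne : T.Nonempty := ⟨2*|c|, Finset.mem_insert_self _ _⟩
  refine ⟨T.max' hTne + 1, ?_, ?_⟩
  · have : 2*|c| ≤ T.max' hTne := Finset.le_max' _ _ (Finset.mem_insert_self _ _)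
    have h2 : (0:ℝ) ≤ 2*|c| := by positivity
    linarith
  · intro n
    have hgn : g n ≤ T.max' hTne + 1 := by
      rcases le_or_gt n N with hn | hn
      · have : g n ∈ T := Finset.mem_insert_of_mem
          (Finset.mem_image_of_mem g (Finset.mem_range.2 (by omega)))
        have := Finset.le_max' _ _ this
        linarith
      · have h1n : 1 ≤ n := by omega
        have hfn := hN n (by omega)
        have hn1 : (1:ℝ) ≤ (n:ℝ) := by exact_mod_cast h1n
        have hnorm : ‖(1:ℝ)/(n:ℝ)‖ = 1/(n:ℝ) := by
          rw [Real.norm_eq_abs, abs_of_pos (by positivity)]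
        rw [hnorm] at hfn
        have hfn' : ‖(f n)‖ ≤ |c| * (1/(n:ℝ)) := by
          calc ‖(f n)‖ = ‖f n‖ := rfl
          _ ≤ c * (1/(n:ℝ)) := hfn
          _ ≤ |c| * (1/(n:ℝ)) := by
              apply mul_le_mul_of_nonneg_right (le_abs_self c) (by positivity)
        have key : g n ≤ 2*|c| := by
          have h2 : ((n:ℝ)+1) ≤ 2*(n:ℝ) := by linarith
          calc g n ≤ (|c| * (1/(n:ℝ))) * ((n:ℝ)+1) := by
                apply mul_le_mul_of_nonneg_right hfn' (by positivity)
          _ ≤ (|c| * (1/(n:ℝ))) * (2*(n:ℝ)) := by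
                apply mul_le_mul_of_nonneg_left h2 (by positivity)
          _ = 2*|c| * ((n:ℝ)/(n:ℝ)) := by ring
          _ = 2*|c| := by rw [div_self (by positivity), mul_one]
        have : 2*|c| ≤ T.max' hTne := Finset.le_max' _ _ (Finset.mem_insert_self _ _)
        linarith
    rw [le_div_iff₀ (by positivity : (0:ℝ) < (n:ℝ)+1)]
    exact hgn

set_option maxHeartbeats 2000000 in
/-- Off-diagonal estimates for the family `e_n(x) = e^{iλ_n x}`,
`ẽ_n(x) = e^{-iλ_n x}` when `λ_n = nπ/l + O(1/n)`: for `j < k`,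
`|⟨e_j, e_k⟩| ≤ C/(k-j)` and `|⟨e_j, e_k⟩ + ⟨ẽ_j, ẽ_k⟩| ≤ C/(⟨j⟩(k-j))`. -/
theorem off_diagonal_inner_product_estimates
    (l : ℝ) (hl : 0 < l) (lam : ℕ → ℂ)
    (h : (fun n : ℕ => lam n - (n : ℂ) * ((Real.pi / l : ℝ) : ℂ))
      =O[atTop] fun n : ℕ => 1 / (n : ℝ)) :
    ∃ C : ℝ, 0 ≤ C ∧ ∀ j k : ℕ, j < k →
      ‖(∫ x in (0:ℝ)..l,
          Complex.exp (Complex.I * lam j * (x : ℂ)) *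
            (starRingEnd ℂ) (Complex.exp (Complex.I * lam k * (x : ℂ))))‖
        ≤ C / ((k : ℝ) - (j : ℝ)) ∧
      ‖((∫ x in (0:ℝ)..l,
          Complex.exp (Complex.I * lam j * (x : ℂ)) *
            (starRingEnd ℂ) (Complex.exp (Complex.I * lam k * (x : ℂ)))) +
        (∫ x in (0:ℝ)..l,
          Complex.exp (-Complex.I * lam j * (x : ℂ)) *
            (starRingEnd ℂ) (Complex.exp (-Complex.I * lam k * (x : ℂ)))))‖
        ≤ C / (Real.sqrt (1 + (j : ℝ) ^ 2) * ((k : ℝ) - (j : ℝ))) := by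
  obtain ⟨A, hA1, hA⟩ := myBigOBound _ h
  have hA0 : (0:ℝ) < A := lt_of_lt_of_le one_pos hA1
  have hπ3 : 3 < Real.pi := Real.pi_gt_three
  set π : ℝ := Real.pi with hπ
  set E : ℝ := Real.exp (2*A*l) with hEdef
  have hE1 : (1:ℝ) ≤ E := Real.one_le_exp (by positivity)
  have hE0 : (0:ℝ) < E := lt_of_lt_of_le one_pos hE1
  set R : ℝ := 4*A*l with hRdef
  have hR0 : (0:ℝ) < R := by positivity
  set c1 : ℝ := 2*l*(E+1) with hc1def
  have hc1 : (0:ℝ) < c1 := by positivity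
  set C : ℝ := c1 + 16*A*E*l^2 + 2*c1*R + l*E*R + 2*l*E*R^2 with hCdef
  have ht1 : (0:ℝ) ≤ 16*A*E*l^2 := by positivity
  have ht2 : (0:ℝ) ≤ 2*c1*R := by positivity
  have ht3 : (0:ℝ) ≤ l*E*R := by positivity
  have ht4 : (0:ℝ) ≤ 2*l*E*R^2 := by positivity
  have hC0 : (0:ℝ) ≤ C := by positivity
  refine ⟨C, hC0, ?_⟩
  intro j k hjk
  have hjr : ((j:ℝ)) + 1 ≤ (k:ℝ) := by exact_mod_cast hjk
  set d : ℝ := (k:ℝ) - (j:ℝ) with hddef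
  have hd1 : (1:ℝ) ≤ d := by rw [hddef]; linarith
  have hd0 : (0:ℝ) < d := lt_of_lt_of_le one_pos hd1
  have hj1 : (1:ℝ) ≤ (j:ℝ) + 1 := by
    have := Nat.cast_nonneg (α := ℝ) j
    linarith
  set μ : ℂ := lam j - (starRingEnd ℂ) (lam k) with hμ
  set η : ℂ := (lam j - (j:ℂ) * ((π/l : ℝ):ℂ))
      - (starRingEnd ℂ) (lam k - (k:ℂ) * ((π/l : ℝ):ℂ)) with hηdef
  have hμη : μ = -(((d * (π/l) : ℝ)):ℂ) + η := by
    rw [hμ, hηdef, hddef]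
    simp only [map_sub, map_mul, Complex.conj_ofReal, map_natCast]
    push_cast
    ring
  have hηabs : ‖η‖ ≤ 2*A/((j:ℝ)+1) := by
    have h1 := hA j
    have h2 := hA k
    have h3 : A/((k:ℝ)+1) ≤ A/((j:ℝ)+1) := by
      apply div_le_div_of_nonneg_left hA0.le (by positivity)
      exact_mod_cast Nat.succ_le_succ hjk.le
    calc ‖η‖ ≤ ‖(lam j - (j:ℂ) * ((π/l : ℝ):ℂ))‖
          + ‖((starRingEnd ℂ) (lam k - (k:ℂ) * ((π/l : ℝ):ℂ)))‖ := by
            rw [hηdef]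
            exact norm_sub_le _ _
    _ = ‖(lam j - (j:ℂ) * ((π/l : ℝ):ℂ))‖
          + ‖(lam k - (k:ℂ) * ((π/l : ℝ):ℂ))‖ := by rw [Complex.norm_conj]
    _ ≤ A/((j:ℝ)+1) + A/((k:ℝ)+1) := add_le_add h1 h2
    _ ≤ A/((j:ℝ)+1) + A/((j:ℝ)+1) := by linarith
    _ = 2*A/((j:ℝ)+1) := by ring
  have hη2A : ‖η‖ ≤ 2*A := by
    calc ‖η‖ ≤ 2*A/((j:ℝ)+1) := hηabs
    _ ≤ 2*A := div_le_self (by positivity) hj1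
  have hIm : |μ.im| ≤ 2*A := by
    have him : μ.im = η.im := by rw [hμη]; simp
    rw [him]
    exact le_trans (Complex.abs_im_le_norm η) hη2A
  -- trivial bounds
  have htriv : ∀ e : ℂ, (starRingEnd ℂ) e = -e → (∀ x : ℝ, x ∈ Set.uIoc (0:ℝ) l →
        (e * μ * (x:ℂ)).re ≤ 2*A*l) →
      ‖(∫ x in (0:ℝ)..l, Complex.exp (e * lam j * (x:ℂ)) *
        (starRingEnd ℂ) (Complex.exp (e * lam k * (x:ℂ))))‖ ≤ E * l := by
    intro e he hB
    rw [hEdef]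
    apply myTrivialBound e (lam j) (lam k) he (2*A*l) l hl
    intro x hx
    have := hB x hx
    rw [hμ] at this
    exact this
  have hreI : ∀ x : ℝ, (Complex.I * μ * (x:ℂ)).re = -μ.im * x := by
    intro x
    simp [Complex.mul_re, Complex.mul_im]
  have hreI' : ∀ x : ℝ, (-Complex.I * μ * (x:ℂ)).re = μ.im * x := by
    intro x
    simp [Complex.mul_re, Complex.mul_im]
  have hxbound : ∀ t x : ℝ, |t| ≤ 2*A → x ∈ Set.uIoc (0:ℝ) l → t * x ≤ 2*A*l := by
    intro t x ht hx
    rw [Set.uIoc_of_le hl.le] at hx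
    obtain ⟨hx0, hxl⟩ := hx
    have h1 : t ≤ 2*A := le_trans (le_abs_self t) ht
    nlinarith
  have htriv1 : ‖(∫ x in (0:ℝ)..l, Complex.exp (Complex.I * lam j * (x:ℂ)) *
      (starRingEnd ℂ) (Complex.exp (Complex.I * lam k * (x:ℂ))))‖ ≤ E * l := by
    apply htriv Complex.I Complex.conj_I
    intro x hx
    rw [hreI x]
    apply hxbound _ _ _ hx
    rw [abs_neg]; exact hIm
  have htriv2 : ‖(∫ x in (0:ℝ)..l, Complex.exp (-Complex.I * lam j * (x:ℂ)) *
      (starRingEnd ℂ) (Complex.exp (-Complex.I * lam k * (x:ℂ))))‖ ≤ E * l := by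
    apply htriv (-Complex.I) (by rw [map_neg, Complex.conj_I, neg_neg])
    intro x hx
    rw [hreI' x]
    exact hxbound _ _ hIm hx
  have hsqrt1 : (1:ℝ) ≤ Real.sqrt (1 + (j:ℝ)^2) := by
    have h1 : (1:ℝ) ≤ 1 + (j:ℝ)^2 := by nlinarith [sq_nonneg ((j:ℝ))]
    have := Real.sqrt_le_sqrt h1
    rwa [Real.sqrt_one] at this
  have hsqrt0 : (0:ℝ) < Real.sqrt (1 + (j:ℝ)^2) := lt_of_lt_of_le one_pos hsqrt1
  have hsqrtle : Real.sqrt (1 + (j:ℝ)^2) ≤ (j:ℝ) + 1 := by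
    have h2 : (1:ℝ) + (j:ℝ)^2 ≤ ((j:ℝ)+1)^2 := by nlinarith [Nat.cast_nonneg (α := ℝ) j]
    have := Real.sqrt_le_sqrt h2
    rwa [Real.sqrt_sq (by positivity)] at this
  have hπl : (0:ℝ) < d*π/(2*l) := by positivity
  have hj0 : ((j:ℝ)+1) ≠ 0 := by positivity
  have hπ0 : π ≠ 0 := by linarith
  have hlow_of : ‖η‖ ≤ d*π/(2*l) → d*π/(2*l) ≤ ‖μ‖ := by
    intro hη2
    have heq : ((d*(π/l) : ℝ) : ℂ) = η - μ := by rw [hμη]; ring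
    have h1 : d*(π/l) ≤ ‖η‖ + ‖μ‖ := by
      calc d*(π/l) = ‖(((d*(π/l) : ℝ)):ℂ)‖ := by
            rw [Complex.norm_real, Real.norm_eq_abs, abs_of_pos (by positivity)]
      _ = ‖(η - μ)‖ := by rw [heq]
      _ ≤ ‖η‖ + ‖μ‖ := by
            exact norm_sub_le _ _
    have h2 : d*(π/l) = 2*(d*π/(2*l)) := by field_simp
    linarith
  -- the formula-based package, available whenever |μ| ≥ dπ/(2l)
  have hexp1 : ‖(Complex.exp (Complex.I * μ * (l:ℂ)))‖ ≤ E := by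
    rw [Complex.norm_exp, hEdef]
    apply Real.exp_le_exp.2
    rw [hreI l]
    nlinarith [(abs_le.1 hIm).1, (abs_le.1 hIm).2, hl.le]
  have hexp2 : ‖(Complex.exp (-Complex.I * μ * (l:ℂ)))‖ ≤ E := by
    rw [Complex.norm_exp, hEdef]
    apply Real.exp_le_exp.2
    rw [hreI' l]
    nlinarith [(abs_le.1 hIm).1, (abs_le.1 hIm).2, hl.le]
  have habsI : ‖(Complex.I * μ)‖ = ‖μ‖ := by
    rw [norm_mul, Complex.norm_I, one_mul]
  have hc1C : c1 ≤ C := by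
    linarith [ht1, ht2, ht3, ht4]
  have haddabs : ‖((∫ x in (0:ℝ)..l, Complex.exp (Complex.I * lam j * (x:ℂ)) *
        (starRingEnd ℂ) (Complex.exp (Complex.I * lam k * (x:ℂ)))) +
      (∫ x in (0:ℝ)..l, Complex.exp (-Complex.I * lam j * (x:ℂ)) *
        (starRingEnd ℂ) (Complex.exp (-Complex.I * lam k * (x:ℂ)))))‖
      ≤ ‖(∫ x in (0:ℝ)..l, Complex.exp (Complex.I * lam j * (x:ℂ)) *
        (starRingEnd ℂ) (Complex.exp (Complex.I * lam k * (x:ℂ))))‖ +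
      ‖(∫ x in (0:ℝ)..l, Complex.exp (-Complex.I * lam j * (x:ℂ)) *
        (starRingEnd ℂ) (Complex.exp (-Complex.I * lam k * (x:ℂ))))‖ := by
    exact norm_add_le _ _
  have hFormula : d*π/(2*l) ≤ ‖μ‖ →
      ‖(∫ x in (0:ℝ)..l, Complex.exp (Complex.I * lam j * (x:ℂ)) *
        (starRingEnd ℂ) (Complex.exp (Complex.I * lam k * (x:ℂ))))‖ ≤ c1/d ∧
      ‖(∫ x in (0:ℝ)..l, Complex.exp (-Complex.I * lam j * (x:ℂ)) *
        (starRingEnd ℂ) (Complex.exp (-Complex.I * lam k * (x:ℂ))))‖ ≤ c1/d ∧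
      (∫ x in (0:ℝ)..l, Complex.exp (Complex.I * lam j * (x:ℂ)) *
        (starRingEnd ℂ) (Complex.exp (Complex.I * lam k * (x:ℂ)))) +
      (∫ x in (0:ℝ)..l, Complex.exp (-Complex.I * lam j * (x:ℂ)) *
        (starRingEnd ℂ) (Complex.exp (-Complex.I * lam k * (x:ℂ))))
        = (Complex.exp (Complex.I*μ*(l:ℂ)) - Complex.exp (-Complex.I*μ*(l:ℂ))) / (Complex.I*μ) := by
    intro hlow
    have hμ0 : μ ≠ 0 := by
      intro h0
      rw [h0, norm_zero] at hlow
      linarith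
    have hμ0' : lam j - (starRingEnd ℂ) (lam k) ≠ 0 := by rw [← hμ]; exact hμ0
    have hne1 : Complex.I * (lam j - (starRingEnd ℂ) (lam k)) ≠ 0 :=
      mul_ne_zero Complex.I_ne_zero hμ0'
    have hne2 : -Complex.I * (lam j - (starRingEnd ℂ) (lam k)) ≠ 0 :=
      mul_ne_zero (neg_ne_zero.2 Complex.I_ne_zero) hμ0'
    have hI1 : (∫ x in (0:ℝ)..l, Complex.exp (Complex.I * lam j * (x:ℂ)) *
        (starRingEnd ℂ) (Complex.exp (Complex.I * lam k * (x:ℂ))))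
        = (Complex.exp (Complex.I * μ * (l:ℂ)) - 1) / (Complex.I * μ) := by
      rw [hμ]
      exact myIntegralFormula Complex.I (lam j) (lam k) Complex.conj_I hne1 l
    have hI2 : (∫ x in (0:ℝ)..l, Complex.exp (-Complex.I * lam j * (x:ℂ)) *
        (starRingEnd ℂ) (Complex.exp (-Complex.I * lam k * (x:ℂ))))
        = (Complex.exp (-Complex.I * μ * (l:ℂ)) - 1) / (-Complex.I * μ) := by
      rw [hμ]
      exact myIntegralFormula (-Complex.I) (lam j) (lam k)
        (by rw [map_neg, Complex.conj_I, neg_neg]) hne2 l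
    have hexp1 : ‖(Complex.exp (Complex.I * μ * (l:ℂ)))‖ ≤ E := by
      rw [Complex.norm_exp, hEdef]
      apply Real.exp_le_exp.2
      rw [hreI l]
      nlinarith [(abs_le.1 hIm).1, (abs_le.1 hIm).2, hl.le]
    have hexp2 : ‖(Complex.exp (-Complex.I * μ * (l:ℂ)))‖ ≤ E := by
      rw [Complex.norm_exp, hEdef]
      apply Real.exp_le_exp.2
      rw [hreI' l]
      nlinarith [(abs_le.1 hIm).1, (abs_le.1 hIm).2, hl.le]
    have habsI : ‖(Complex.I * μ)‖ = ‖μ‖ := by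
      rw [norm_mul, Complex.norm_I, one_mul]
    have habsI' : ‖(-Complex.I * μ)‖ = ‖μ‖ := by
      rw [norm_mul, norm_neg, Complex.norm_I, one_mul]
    have hnum1 : ‖(Complex.exp (Complex.I * μ * (l:ℂ)) - 1)‖ ≤ E + 1 := by
      calc ‖(Complex.exp (Complex.I * μ * (l:ℂ)) - 1)‖
          ≤ ‖(Complex.exp (Complex.I * μ * (l:ℂ)))‖ + ‖(1:ℂ)‖ := by
            exact norm_sub_le _ _
      _ ≤ E + 1 := by rw [norm_one]; linarith
    have hnum2 : ‖(Complex.exp (-Complex.I * μ * (l:ℂ)) - 1)‖ ≤ E + 1 := by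
      calc ‖(Complex.exp (-Complex.I * μ * (l:ℂ)) - 1)‖
          ≤ ‖(Complex.exp (-Complex.I * μ * (l:ℂ)))‖ + ‖(1:ℂ)‖ := by
            exact norm_sub_le _ _
      _ ≤ E + 1 := by rw [norm_one]; linarith
    have hquot : (E+1)/(d*π/(2*l)) ≤ c1/d := by
      have heq2 : (E+1)/(d*π/(2*l)) = c1/(π*d) := by
        rw [hc1def]; field_simp
      rw [heq2]
      apply div_le_div_of_nonneg_left hc1.le hd0
      nlinarith [mul_le_mul_of_nonneg_right (by linarith : (1:ℝ) ≤ π) hd0.le]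
    refine ⟨?_, ?_, ?_⟩
    · rw [hI1, norm_div, habsI]
      calc ‖(Complex.exp (Complex.I * μ * (l:ℂ)) - 1)‖ / ‖μ‖
          ≤ (E+1)/(d*π/(2*l)) := div_le_div₀ (by positivity) hnum1 hπl hlow
      _ ≤ c1/d := hquot
    · rw [hI2, norm_div, habsI']
      calc ‖(Complex.exp (-Complex.I * μ * (l:ℂ)) - 1)‖ / ‖μ‖
          ≤ (E+1)/(d*π/(2*l)) := div_le_div₀ (by positivity) hnum2 hπl hlow
      _ ≤ c1/d := hquot
    · rw [hI1, hI2]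
      have hIμ : Complex.I * μ ≠ 0 := mul_ne_zero Complex.I_ne_zero hμ0
      field_simp
      ring
  by_cases hjR : R ≤ (j:ℝ)+1
  · -- Case I : j large
    have h2AR : 2*A/R = 1/(2*l) := by rw [hRdef]; field_simp; ring
    have hηhalf : ‖η‖ ≤ 1/(2*l) := by
      rw [← h2AR]
      calc ‖η‖ ≤ 2*A/((j:ℝ)+1) := hηabs
      _ ≤ 2*A/R := div_le_div_of_nonneg_left (by positivity) hR0 hjR
    have hlow : d*π/(2*l) ≤ ‖μ‖ := by
      apply hlow_of
      calc ‖η‖ ≤ 1/(2*l) := hηhalf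
      _ ≤ d*π/(2*l) := by
          have h13 : (1:ℝ)*3 ≤ d*π := mul_le_mul hd1 hπ3.le (by norm_num) hd0.le
          exact div_le_div₀ (by positivity) (by linarith) (by positivity) (le_refl (2*l))
    obtain ⟨hEst1, hEst2, hS⟩ := hFormula hlow
    refine ⟨le_trans hEst1 (div_le_div₀ hC0 hc1C hd0 (le_refl d)), ?_⟩
    have habseq : ‖(2*Complex.I*η*(l:ℂ))‖ = 2*‖η‖*l := by
      rw [norm_mul, norm_mul, norm_mul, Complex.norm_two, Complex.norm_I,
        Complex.norm_real, Real.norm_eq_abs, abs_of_pos hl]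
      ring
    have hsmall1 : ‖(2*Complex.I*η*(l:ℂ))‖ ≤ 1 := by
      rw [habseq]
      have h1 : ‖η‖ * (2*l) ≤ 1 := by
        rw [← le_div_iff₀ (by positivity : (0:ℝ) < 2*l)]
        exact hηhalf
      linarith
    set m : ℕ := k - j with hm
    have hmd : ((m:ℝ)) = d := by
      rw [hddef, hm]
      push_cast [Nat.cast_sub hjk.le]
      ring
    have hmdC : ((m:ℕ):ℂ) = ((d:ℝ):ℂ) := by exact_mod_cast congrArg Complex.ofReal hmd
    have hl0 : ((l:ℝ):ℂ) ≠ 0 := Complex.ofReal_ne_zero.2 hl.ne'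
    have harg : 2*Complex.I*μ*(l:ℂ)
        = 2*Complex.I*η*(l:ℂ) + ((-(m:ℤ) : ℤ) : ℂ)*(2*((π:ℝ):ℂ)*Complex.I) := by
      rw [hμη]
      push_cast
      rw [hmdC]
      field_simp
      ring
    have hexpper : Complex.exp (2*Complex.I*μ*(l:ℂ)) = Complex.exp (2*Complex.I*η*(l:ℂ)) := by
      rw [harg, Complex.exp_add, Complex.exp_int_mul_two_pi_mul_I, mul_one]
    have h9 : -Complex.I*μ*(l:ℂ) + 2*Complex.I*μ*(l:ℂ) = Complex.I*μ*(l:ℂ) := by ring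
    have hdiff : Complex.exp (Complex.I*μ*(l:ℂ)) - Complex.exp (-Complex.I*μ*(l:ℂ))
        = Complex.exp (-Complex.I*μ*(l:ℂ)) * (Complex.exp (2*Complex.I*η*(l:ℂ)) - 1) := by
      have h10 : Complex.exp (-Complex.I*μ*(l:ℂ)) * Complex.exp (2*Complex.I*μ*(l:ℂ))
          = Complex.exp (Complex.I*μ*(l:ℂ)) := by
        rw [← Complex.exp_add, h9]
      linear_combination (-1 : ℂ) * h10 + Complex.exp (-Complex.I*μ*(l:ℂ)) * hexpper
    have habsdiff : ‖(Complex.exp (Complex.I*μ*(l:ℂ)) - Complex.exp (-Complex.I*μ*(l:ℂ)))‖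
        ≤ E * (2*(2*‖η‖*l)) := by
      rw [hdiff, norm_mul]
      apply mul_le_mul hexp2 ?_ (by positivity) hE0.le
      have := Complex.norm_exp_sub_one_le (x := 2*Complex.I*η*(l:ℂ)) hsmall1
      rwa [habseq] at this
    have hSabs : ‖((∫ x in (0:ℝ)..l, Complex.exp (Complex.I * lam j * (x:ℂ)) *
          (starRingEnd ℂ) (Complex.exp (Complex.I * lam k * (x:ℂ)))) +
        (∫ x in (0:ℝ)..l, Complex.exp (-Complex.I * lam j * (x:ℂ)) *
          (starRingEnd ℂ) (Complex.exp (-Complex.I * lam k * (x:ℂ)))))‖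
        ≤ E*(2*(2*‖η‖*l))/(d*π/(2*l)) := by
      rw [hS, norm_div, habsI]
      exact div_le_div₀ (by positivity) habsdiff hπl hlow
    have hchain : E*(2*(2*‖η‖*l))/(d*π/(2*l)) ≤ 16*A*E*l^2/(((j:ℝ)+1)*d) := by
      have h1 : E*(2*(2*‖η‖*l)) ≤ E*(2*(2*(2*A/((j:ℝ)+1))*l)) := by
        have h2 := mul_le_mul_of_nonneg_left hηabs (by positivity : (0:ℝ) ≤ 4*E*l)
        linarith
      calc E*(2*(2*‖η‖*l))/(d*π/(2*l))
          ≤ E*(2*(2*(2*A/((j:ℝ)+1))*l))/(d*π/(2*l)) :=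
            div_le_div₀ (by positivity) h1 hπl (le_refl _)
      _ = (16*A*E*l^2/(((j:ℝ)+1)*d)) / π := by field_simp; ring
      _ ≤ 16*A*E*l^2/(((j:ℝ)+1)*d) := div_le_self (by positivity) (by linarith)
    have hc2C : 16*A*E*l^2 ≤ C := by
      linarith [hc1.le, ht2, ht3, ht4]
    calc ‖_‖ ≤ 16*A*E*l^2/(((j:ℝ)+1)*d) := le_trans hSabs hchain
    _ ≤ C/(Real.sqrt (1+(j:ℝ)^2)*d) :=
        div_le_div₀ hC0 hc2C (by positivity) (mul_le_mul_of_nonneg_right hsqrtle hd0.le)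
  · by_cases hdR : R ≤ d
    · -- Case II : gap large
      have hlow : d*π/(2*l) ≤ ‖μ‖ := by
        apply hlow_of
        calc ‖η‖ ≤ 2*A := hη2A
        _ ≤ d*π/(2*l) := by
            rw [le_div_iff₀ (by positivity)]
            have h13 : R*3 ≤ d*π :=
              mul_le_mul hdR hπ3.le (by norm_num) (le_trans hR0.le hdR)
            have hAl : (0:ℝ) ≤ A*l := by positivity
            linarith
      obtain ⟨hEst1, hEst2, hS⟩ := hFormula hlow
      refine ⟨le_trans hEst1 (div_le_div₀ hC0 hc1C hd0 (le_refl d)), ?_⟩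
      have hsR : Real.sqrt (1+(j:ℝ)^2) ≤ R := le_trans hsqrtle (by linarith [not_le.1 hjR])
      have hCge : 2*c1*R ≤ C := by
        linarith [hc1.le, ht1, ht3, ht4]
      calc ‖_‖ ≤ c1/d + c1/d := le_trans haddabs (add_le_add hEst1 hEst2)
      _ = 2*c1/d := by ring
      _ ≤ C/(Real.sqrt (1+(j:ℝ)^2)*d) := by
          rw [div_le_div_iff₀ hd0 (by positivity)]
          linarith [mul_le_mul_of_nonneg_right
              (mul_le_mul_of_nonneg_left hsR (by positivity : (0:ℝ) ≤ 2*c1)) hd0.le,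
            mul_le_mul_of_nonneg_right hCge hd0.le]
    · -- Case III : both small
      have hdR' : d < R := not_le.1 hdR
      have hsR : Real.sqrt (1+(j:ℝ)^2) ≤ R := le_trans hsqrtle (by linarith [not_le.1 hjR])
      refine ⟨?_, ?_⟩
      · calc ‖_‖ ≤ E*l := htriv1
        _ ≤ C/d := by
            rw [le_div_iff₀ hd0]
            have hCge3 : l*E*R ≤ C := by
              linarith [hc1.le, ht1, ht2, ht4]
            linarith [mul_le_mul_of_nonneg_left hdR'.le (by positivity : (0:ℝ) ≤ E*l)]
      · calc ‖_‖ ≤ E*l + E*l := le_trans haddabs (add_le_add htriv1 htriv2)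
        _ ≤ C/(Real.sqrt (1+(j:ℝ)^2)*d) := by
            rw [le_div_iff₀ (by positivity)]
            have hCge2 : 2*l*E*R^2 ≤ C := by
              linarith [hc1.le, ht1, ht2, ht3]
            have hm1 : Real.sqrt (1+(j:ℝ)^2)*d ≤ R*R :=
              mul_le_mul hsR hdR'.le hd0.le hR0.le
            linarith [mul_le_mul_of_nonneg_left hm1 (by positivity : (0:ℝ) ≤ 2*E*l)]
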